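/- Fix h₀ ∈ (0,1) and a continuous nondecreasing h : [0,1] → (0,1] with h(t) = h₀ for t ∈ [0,1/2] and h(1) = 1. For j ≥ 1 define f_j : [0,2] → (0,1] by f_j(t) = h(j·t) for t ∈ [0, 1/j] and f_j(t) = 1 for t ∈ (1/j, 2]. Let X be a compact length space and let d̂_j denote the null distance of the warped product [0,2] ×_{f_j} X. For p = (t_p, x) and q = (t_q, y) in [0,2] × X define d₀(p,q) := min{ max(|t_p − t_q|, d(x,y)), t_p + t_q + h₀ · inf{ d(x',y') : x', y' ∈ X, d(x,x') ≤ t_p, d(y,y') ≤ t_q } }. Then sup_{p,q ∈ [0,2]×X} |d̂_j(p,q) − d₀(p,q)| → 0 as j → ∞. (In particular, although f_j → f_∞ pointwise with f_∞ ≡ 1 on (0,2], the null distances do not converge to the null distance max(|Δt|, d) of the limiting warped product.) -/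

import Mathlib

open MeasureTheory

/-- Causal relation of the warped product `I ×_f X`: `(s,x) ≼_f (t,y)` iff `s ≤ t` and
`d(x,y) ≤ ∫_s^t f(u)⁻¹ du`. -/
def WPCausal {X : Type*} [MetricSpace X] (f : ℝ → ℝ) (p q : ℝ × X) : Prop :=
  p.1 ≤ q.1 ∧
    ENNReal.ofReal (dist p.2 q.2) ≤ ∫⁻ u in Set.Ioc p.1 q.1, ENNReal.ofReal ((f u)⁻¹)

/-- `σ` is a piecewise causal chain with `n+1` segments from `p` to `q` inside `I × X`. -/
def WPChain {X : Type*} [MetricSpace X] (I : Set ℝ) (f : ℝ → ℝ) (p q : ℝ × X) (n : ℕ)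
    (σ : ℕ → ℝ × X) : Prop :=
  σ 0 = p ∧ σ (n + 1) = q ∧ (∀ i ≤ n + 1, (σ i).1 ∈ I) ∧
    ∀ i ≤ n, WPCausal f (σ i) (σ (i + 1)) ∨ WPCausal f (σ (i + 1)) (σ i)

/-- The null distance of the warped product `I ×_f X`. -/
noncomputable def nullDist {X : Type*} [MetricSpace X] (I : Set ℝ) (f : ℝ → ℝ)
    (p q : ℝ × X) : ℝ :=
  sInf { r | ∃ n σ, WPChain I f p q n σ ∧
    r = ∑ i ∈ Finset.range (n + 1), |(σ (i + 1)).1 - (σ i).1| }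

/-- The warping functions of the example: `f_j(t) = h(j·t)` for `t ∈ [0,1/j]` and
`f_j(t) = 1` for `t ∈ (1/j,2]`. -/
noncomputable def warpSeq (h : ℝ → ℝ) (j : ℕ) : ℝ → ℝ :=
  fun t => if t ≤ 1 / (j : ℝ) then h ((j : ℝ) * t) else 1

/-- The limit distance of the example: for `p = (t_p,x)`, `q = (t_q,y)`,
`d₀(p,q) = min{ max(|t_p−t_q|, d(x,y)),
               t_p + t_q + h₀·inf{ d(x',y') : d(x,x') ≤ t_p, d(y,y') ≤ t_q } }`. -/
noncomputable def limDist {X : Type*} [MetricSpace X] (h₀ : ℝ) (p q : ℝ × X) : ℝ :=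
  min (max |p.1 - q.1| (dist p.2 q.2))
    (p.1 + q.1 + h₀ * sInf { r : ℝ | ∃ x' y' : X,
      dist p.2 x' ≤ p.1 ∧ dist q.2 y' ≤ q.1 ∧ r = dist x' y' })



section auxiliary

variable {X : Type*} [MetricSpace X]

lemma subdivAux (hX : ∀ x y : X, ∀ ε : ℝ, 0 < ε →
      ∃ z : X, max (dist x z) (dist z y) ≤ dist x y / 2 + ε)
    {δ : ℝ} (hδ : 0 < δ) :
    ∀ k : ℕ, ∀ x y : X, ∀ ε : ℝ, 0 < ε → dist x y ≤ δ * (4/3)^k →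
    ∃ N : ℕ, ∃ z : ℕ → X, z 0 = x ∧ z N = y ∧ (∀ i < N, dist (z i) (z (i+1)) ≤ δ) ∧
      ∑ i ∈ Finset.range N, dist (z i) (z (i+1)) ≤ dist x y + ε := by
  intro k
  induction k with
  | zero =>
    intro x y ε hε hd
    refine ⟨1, fun i => if i = 0 then x else y, rfl, rfl, ?_, ?_⟩
    · intro i hi
      interval_cases i
      simpa using hd.trans_eq (by norm_num)
    · simp [Finset.sum_range_one]
      linarith
  | succ k ih =>
    intro x y ε hε hd
    by_cases hsmall : dist x y ≤ δ * (4/3)^k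
    · exact ih x y ε hε hsmall
    · push_neg at hsmall
      have hpow : (0:ℝ) < δ * (4/3)^k := by positivity
      set ε' := min (ε/4) (δ * (4/3)^k / 8) with hε'def
      have hε'pos : 0 < ε' := lt_min (by linarith) (by linarith)
      obtain ⟨w, hw⟩ := hX x y ε' hε'pos
      have hhalf : dist x y / 2 + ε' ≤ δ * (4/3)^k := by
        have h1 : dist x y / 2 ≤ δ * (4/3)^(k+1) / 2 := by linarith
        have h2 : ε' ≤ δ * (4/3)^k / 8 := min_le_right _ _
        have : δ * (4/3)^(k+1) / 2 = (2/3) * (δ * (4/3)^k) := by ring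
        nlinarith
      have h1 : dist x w ≤ δ * (4/3)^k :=
        le_trans (le_trans (le_max_left _ _) hw) hhalf
      have h2 : dist w y ≤ δ * (4/3)^k :=
        le_trans (le_trans (le_max_right _ _) hw) hhalf
      obtain ⟨N₁, z₁, hz₁0, hz₁N, hz₁d, hz₁s⟩ := ih x w (ε/4) (by linarith) h1
      obtain ⟨N₂, z₂, hz₂0, hz₂N, hz₂d, hz₂s⟩ := ih w y (ε/4) (by linarith) h2
      set z : ℕ → X := fun i => if i < N₁ then z₁ i else z₂ (i - N₁) with hzdef
      have wle : ∀ i ≤ N₁, z i = z₁ i := by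
        intro i hi
        rcases lt_or_eq_of_le hi with hlt | heq
        · simp [hzdef, hlt]
        · subst heq; simp [hzdef, hz₂0, hz₁N]
      have wge : ∀ i, z (N₁ + i) = z₂ i := by
        intro i
        simp [hzdef, Nat.add_sub_cancel_left]
      have hsum2 : ∀ M, M ≤ N₂ → ∑ i ∈ Finset.range M, dist (z (N₁ + i)) (z (N₁ + i + 1))
          = ∑ i ∈ Finset.range M, dist (z₂ i) (z₂ (i+1)) := by
        intro M hM
        refine Finset.sum_congr rfl fun i hi => ?_
        rw [wge i, show N₁ + i + 1 = N₁ + (i+1) by ring, wge (i+1)]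
      have hpieceeq : ∀ i < N₁, dist (z i) (z (i+1)) = dist (z₁ i) (z₁ (i+1)) := by
        intro i hi
        rw [wle i (le_of_lt hi), wle (i+1) hi]
      refine ⟨N₁ + N₂, z, ?_, ?_, ?_, ?_⟩
      · rw [wle 0 (Nat.zero_le _), hz₁0]
      · rw [show N₁ + N₂ = N₁ + N₂ by rfl, wge N₂, hz₂N]
      · intro i hi
        by_cases hiN : i < N₁
        · rw [hpieceeq i hiN]; exact hz₁d i hiN
        · push_neg at hiN
          obtain ⟨m, rfl⟩ := Nat.exists_eq_add_of_le hiN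
          have hm : m < N₂ := by omega
          rw [wge m, show N₁ + m + 1 = N₁ + (m+1) by ring, wge (m+1)]
          exact hz₂d m hm
      · have hsplit : ∑ i ∈ Finset.range (N₁ + N₂), dist (z i) (z (i+1))
            = ∑ i ∈ Finset.range N₁, dist (z i) (z (i+1))
              + ∑ i ∈ Finset.range N₂, dist (z (N₁ + i)) (z (N₁ + i + 1)) :=
          Finset.sum_range_add _ _ _
        rw [hsplit, hsum2 N₂ le_rfl, Finset.sum_congr rfl (fun i hi => hpieceeq i (Finset.mem_range.mp hi))]
        have htri : dist x w + dist w y ≤ dist x y + 2 * ε' := by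
          have hxw := le_trans (le_max_left _ _) hw
          have hwy := le_trans (le_max_right _ _) hw
          linarith
        have hε'4 : ε' ≤ ε/4 := min_le_left _ _
        linarith

lemma subdiv (hX : ∀ x y : X, ∀ ε : ℝ, 0 < ε →
      ∃ z : X, max (dist x z) (dist z y) ≤ dist x y / 2 + ε)
    {δ ε : ℝ} (hδ : 0 < δ) (hε : 0 < ε) (x y : X) :
    ∃ N : ℕ, ∃ z : ℕ → X, z 0 = x ∧ z N = y ∧ (∀ i < N, dist (z i) (z (i+1)) ≤ δ) ∧
      ∑ i ∈ Finset.range N, dist (z i) (z (i+1)) ≤ dist x y + ε := by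
  obtain ⟨k, hk⟩ := pow_unbounded_of_one_lt (dist x y / δ) (by norm_num : (1:ℝ) < 4/3)
  exact subdivAux hX hδ k x y ε hε (by rw [mul_comm]; exact le_of_lt ((div_lt_iff₀ hδ).mp hk))

lemma exists_near (hX : ∀ x y : X, ∀ ε : ℝ, 0 < ε →
      ∃ z : X, max (dist x z) (dist z y) ≤ dist x y / 2 + ε)
    {x y : X} {tp tq η : ℝ} (htp : 0 ≤ tp) (htq : 0 ≤ tq) (hη : 0 < η) :
    ∃ x' y' : X, dist x x' ≤ tp ∧ dist y y' ≤ tq ∧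
      dist x' y' ≤ max (dist x y - tp - tq) 0 + 3 * η := by
  classical
  obtain ⟨N, z, hz0, hzN, hd, hs⟩ := subdiv hX hη hη x y
  set d : ℕ → ℝ := fun k => dist (z k) (z (k+1)) with hddef
  set pre : ℕ → ℝ := fun i => ∑ k ∈ Finset.range i, d k with hpredef
  have hdnn : ∀ k, 0 ≤ d k := fun k => dist_nonneg
  have hpremono : Monotone pre := by
    intro i j hij
    exact Finset.sum_le_sum_of_subset_of_nonneg (Finset.range_subset_range.mpr hij)
      (fun k _ _ => hdnn k)
  have hxz : ∀ i, dist x (z i) ≤ pre i := by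
    intro i
    simpa [hz0] using dist_le_range_sum_dist z i
  have hzsplit : ∀ i ≤ N, pre N = pre i + ∑ k ∈ Finset.range (N - i), d (i + k) := by
    intro i hi
    have h := Finset.sum_range_add d i (N - i)
    rw [show i + (N - i) = N by omega] at h
    exact h
  have hzy : ∀ i ≤ N, dist (z i) y ≤ pre N - pre i := by
    intro i hi
    have h1 : dist (z i) (z (i + (N - i))) ≤ ∑ k ∈ Finset.range (N - i), d (i + k) := by
      have := dist_le_range_sum_dist (fun k => z (i + k)) (N - i)
      simpa [hddef, show ∀ k, i + k + 1 = i + (k+1) from fun k => by ring] using this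
    rw [show i + (N - i) = N by omega, hzN] at h1
    linarith [hzsplit i hi]
  have hzz : ∀ i j, i ≤ j → j ≤ N → dist (z i) (z j) ≤ pre j - pre i := by
    intro i j hij hj
    have h1 : dist (z i) (z (i + (j - i))) ≤ ∑ k ∈ Finset.range (j - i), d (i + k) := by
      have := dist_le_range_sum_dist (fun k => z (i + k)) (j - i)
      simpa [hddef, show ∀ k, i + k + 1 = i + (k+1) from fun k => by ring] using this
    rw [show i + (j - i) = j by omega] at h1
    have h2 : pre j = pre i + ∑ k ∈ Finset.range (j - i), d (i + k) := by
      have h := Finset.sum_range_add d i (j - i)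
      rw [show i + (j - i) = j by omega] at h
      exact h
    linarith
  by_cases hbig : pre N ≤ tp
  · refine ⟨y, y, ?_, by simpa using htq, ?_⟩
    · calc dist x y = dist x (z N) := by rw [hzN]
        _ ≤ pre N := hxz N
        _ ≤ tp := hbig
    · simp only [dist_self]
      positivity
  · push_neg at hbig
    have hexP : ∃ i, tp < pre i := ⟨N, hbig⟩
    set m' := Nat.find hexP with hm'def
    have hm'P : tp < pre m' := Nat.find_spec hexP
    have hm'pos : m' ≠ 0 := by
      intro h0
      rw [h0] at hm'P
      simp [hpredef] at hm'P
      linarith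
    set m := m' - 1 with hmdef
    have hmm' : m + 1 = m' := by omega
    have hprem : pre m ≤ tp := by
      by_contra hc
      push_neg at hc
      exact Nat.find_min hexP (by omega) hc
    have hm'N : m' ≤ N := Nat.find_le hbig
    have hmN : m < N := by omega
    have hprem' : tp - η < pre m := by
      have : pre (m+1) = pre m + d m := Finset.sum_range_succ d m
      have hdm : d m ≤ η := hd m hmN
      rw [hmm'] at this
      linarith
    -- now the suffix search
    have hexQ : ∃ l, pre N - pre (m + l) ≤ tq := ⟨N - m, by rw [show m + (N - m) = N by omega]; linarith⟩
    set l := Nat.find hexQ with hldef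
    have hlQ : pre N - pre (m + l) ≤ tq := Nat.find_spec hexQ
    have hlN : m + l ≤ N := by
      have : l ≤ N - m := Nat.find_le (by rw [show m + (N - m) = N by omega]; linarith)
      omega
    refine ⟨z m, z (m + l), ?_, ?_, ?_⟩
    · exact (hxz m).trans hprem
    · rw [dist_comm]; exact (hzy (m + l) hlN).trans hlQ
    · rcases Nat.eq_zero_or_pos l with hl0 | hlpos
      · simp [hl0]
        positivity
      · have hnotQ : tq < pre N - pre (m + (l - 1)) := by
          have := Nat.find_min hexQ (show l - 1 < l by omega)
          push_neg at this
          exact this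
        have hstep : pre (m + l) ≤ pre (m + (l-1)) + η := by
          have : pre (m + (l-1) + 1) = pre (m + (l-1)) + d (m + (l-1)) :=
            Finset.sum_range_succ d _
          have hdm : d (m + (l-1)) ≤ η := hd _ (by omega)
          rw [show m + (l-1) + 1 = m + l by omega] at this
          linarith
        have h1 : dist (z m) (z (m + l)) ≤ pre (m + l) - pre m :=
          hzz m (m + l) (by omega) hlN
        have h2 : pre N ≤ dist x y + η := hs
        have : dist (z m) (z (m + l)) ≤ dist x y - tp - tq + 3*η := by linarith
        exact this.trans (by
          have : dist x y - tp - tq ≤ max (dist x y - tp - tq) 0 := le_max_left _ _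
          linarith)

lemma bottomInf_eq (hX : ∀ x y : X, ∀ ε : ℝ, 0 < ε →
      ∃ z : X, max (dist x z) (dist z y) ≤ dist x y / 2 + ε)
    (p q : ℝ × X) (hp : 0 ≤ p.1) (hq : 0 ≤ q.1) :
    sInf { r : ℝ | ∃ x' y' : X, dist p.2 x' ≤ p.1 ∧ dist q.2 y' ≤ q.1 ∧ r = dist x' y' }
      = max (dist p.2 q.2 - p.1 - q.1) 0 := by
  have hbdd : BddBelow { r : ℝ | ∃ x' y' : X, dist p.2 x' ≤ p.1 ∧ dist q.2 y' ≤ q.1 ∧ r = dist x' y' } := by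
    refine ⟨0, fun r hr => ?_⟩
    obtain ⟨x', y', _, _, rfl⟩ := hr
    exact dist_nonneg
  apply le_antisymm
  · refine le_of_forall_pos_le_add fun η hη => ?_
    obtain ⟨x', y', hx', hy', hd⟩ := exists_near hX hp hq (show 0 < η/3 by linarith)
    refine (csInf_le hbdd ⟨x', y', hx', hy', rfl⟩).trans ?_
    linarith
  · refine le_csInf ⟨dist p.2 q.2, p.2, q.2, by simpa using hp, by simpa using hq, rfl⟩
      fun r hr => ?_
    obtain ⟨x', y', hx', hy', rfl⟩ := hr
    refine max_le ?_ dist_nonneg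
    have := dist_triangle p.2 x' y'
    have := dist_triangle4 p.2 x' y' q.2
    have h4 : dist p.2 q.2 ≤ dist p.2 x' + dist x' y' + dist y' q.2 := dist_triangle4 _ _ _ _
    have : dist y' q.2 = dist q.2 y' := dist_comm _ _
    linarith

end auxiliary

section warp

variable {h₀ : ℝ} {h : ℝ → ℝ} {j : ℕ}

lemma ju_mem (hj : 1 ≤ j) {u : ℝ} (hu : 0 < u) (hu2 : u ≤ 1 / (j:ℝ)) :
    (j:ℝ) * u ∈ Set.Icc (0:ℝ) 1 := by
  have hjpos : (0:ℝ) < j := by exact_mod_cast hj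
  constructor
  · positivity
  · calc (j:ℝ) * u ≤ (j:ℝ) * (1 / j) := by nlinarith
      _ = 1 := by field_simp

lemma warp_inv_ge_one (hrange : ∀ t ∈ Set.Icc (0 : ℝ) 1, 0 < h t ∧ h t ≤ 1)
    (hj : 1 ≤ j) {u : ℝ} (hu : 0 < u) : 1 ≤ (warpSeq h j u)⁻¹ := by
  unfold warpSeq
  split_ifs with hle
  · obtain ⟨h1, h2⟩ := hrange _ (ju_mem hj hu hle)
    rw [le_inv_comm₀ one_pos h1]
    simpa using h2
  · norm_num

lemma warp_inv_le (hh₀ : 0 < h₀ ∧ h₀ < 1)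
    (hmono : MonotoneOn h (Set.Icc 0 1))
    (hval : ∀ t ∈ Set.Icc (0 : ℝ) (1 / 2), h t = h₀)
    (hrange : ∀ t ∈ Set.Icc (0 : ℝ) 1, 0 < h t ∧ h t ≤ 1)
    (hj : 1 ≤ j) {u : ℝ} (hu : 0 < u) : (warpSeq h j u)⁻¹ ≤ h₀⁻¹ := by
  unfold warpSeq
  split_ifs with hle
  · have hmem := ju_mem hj hu hle
    have hge : h₀ ≤ h ((j:ℝ) * u) := by
      have h0 : h 0 = h₀ := hval 0 (by norm_num)
      rw [← h0]
      exact hmono (by norm_num) hmem hmem.1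
    exact inv_anti₀ hh₀.1 hge
  · rw [inv_one, le_inv_comm₀ one_pos hh₀.1]
    simpa using hh₀.2.le

lemma warp_inv_bottom (hval : ∀ t ∈ Set.Icc (0 : ℝ) (1 / 2), h t = h₀)
    (hj : 1 ≤ j) {u : ℝ} (hu : 0 < u) (hub : u ≤ 1 / (2 * (j:ℝ))) :
    (warpSeq h j u)⁻¹ = h₀⁻¹ := by
  have hjpos : (0:ℝ) < j := by exact_mod_cast hj
  have hle : u ≤ 1 / (j:ℝ) := by
    refine hub.trans ?_
    rw [div_le_div_iff₀ (by positivity) hjpos]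
    nlinarith
  unfold warpSeq
  rw [if_pos hle]
  have : h ((j:ℝ) * u) = h₀ := by
    apply hval
    constructor
    · positivity
    · have h2ju : u * (2*(j:ℝ)) ≤ 1 := (le_div_iff₀ (by positivity)).mp hub
      nlinarith
  rw [this]

lemma warp_inv_top {u : ℝ} (hu : 1 / (j:ℝ) < u) : (warpSeq h j u)⁻¹ = 1 := by
  unfold warpSeq
  rw [if_neg (not_le.mpr hu), inv_one]

end warp

section integrals

lemma lint_ge (f : ℝ → ℝ) {c s t : ℝ} (hc : 0 ≤ c) (hst : s ≤ t)
    (hf : ∀ u ∈ Set.Ioc s t, c ≤ (f u)⁻¹) :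
    ENNReal.ofReal (c * (t - s)) ≤ ∫⁻ u in Set.Ioc s t, ENNReal.ofReal ((f u)⁻¹) := by
  have h1 : ∫⁻ _ in Set.Ioc s t, ENNReal.ofReal c = ENNReal.ofReal (c * (t-s)) := by
    rw [setLIntegral_const, Real.volume_Ioc, ← ENNReal.ofReal_mul hc]
  rw [← h1]
  exact setLIntegral_mono_ae' measurableSet_Ioc
    (Filter.Eventually.of_forall fun u hu => ENNReal.ofReal_le_ofReal (hf u hu))

lemma lint_le (f : ℝ → ℝ) {c s t : ℝ} (hc : 0 ≤ c) (hst : s ≤ t)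
    (hf : ∀ u ∈ Set.Ioc s t, (f u)⁻¹ ≤ c) :
    ∫⁻ u in Set.Ioc s t, ENNReal.ofReal ((f u)⁻¹) ≤ ENNReal.ofReal (c * (t - s)) := by
  have h1 : ∫⁻ _ in Set.Ioc s t, ENNReal.ofReal c = ENNReal.ofReal (c * (t-s)) := by
    rw [setLIntegral_const, Real.volume_Ioc, ← ENNReal.ofReal_mul hc]
  rw [← h1]
  exact setLIntegral_mono_ae' measurableSet_Ioc
    (Filter.Eventually.of_forall fun u hu => ENNReal.ofReal_le_ofReal (hf u hu))

variable {h₀ : ℝ} {h : ℝ → ℝ} {j : ℕ}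

lemma lint_warp_ge (hrange : ∀ t ∈ Set.Icc (0 : ℝ) 1, 0 < h t ∧ h t ≤ 1)
    (hj : 1 ≤ j) {s t : ℝ} (hs : 0 ≤ s) (hst : s ≤ t) :
    ENNReal.ofReal (t - s) ≤ ∫⁻ u in Set.Ioc s t, ENNReal.ofReal ((warpSeq h j u)⁻¹) := by
  have := lint_ge (warpSeq h j) (zero_le_one) hst
    (fun u hu => warp_inv_ge_one hrange hj (lt_of_le_of_lt hs hu.1))
  simpa using this

lemma lint_warp_bottom (hval : ∀ t ∈ Set.Icc (0 : ℝ) (1 / 2), h t = h₀)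
    (hh₀ : 0 < h₀ ∧ h₀ < 1) (hj : 1 ≤ j) {s t : ℝ} (hs : 0 ≤ s) (hst : s ≤ t)
    (ht : t ≤ 1 / (2 * (j:ℝ))) :
    ENNReal.ofReal (h₀⁻¹ * (t - s)) ≤ ∫⁻ u in Set.Ioc s t, ENNReal.ofReal ((warpSeq h j u)⁻¹) :=
  lint_ge (warpSeq h j) (inv_nonneg.mpr hh₀.1.le) hst
    (fun u hu => (warp_inv_bottom hval hj (lt_of_le_of_lt hs hu.1) (hu.2.trans ht)).ge)

lemma lint_warp_le (hh₀ : 0 < h₀ ∧ h₀ < 1)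
    (hmono : MonotoneOn h (Set.Icc 0 1))
    (hval : ∀ t ∈ Set.Icc (0 : ℝ) (1 / 2), h t = h₀)
    (hrange : ∀ t ∈ Set.Icc (0 : ℝ) 1, 0 < h t ∧ h t ≤ 1)
    (hj : 1 ≤ j) {s t : ℝ} (hs : 0 ≤ s) (hst : s ≤ t) :
    ∫⁻ u in Set.Ioc s t, ENNReal.ofReal ((warpSeq h j u)⁻¹)
      ≤ ENNReal.ofReal (h₀⁻¹ * (max s (min (1/(j:ℝ)) t) - s)
          + (t - max s (min (1/(j:ℝ)) t))) := by
  set m := max s (min (1/(j:ℝ)) t) with hm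
  have hsm : s ≤ m := le_max_left _ _
  have hmt : m ≤ t := max_le hst (min_le_right _ _)
  rw [← Set.Ioc_union_Ioc_eq_Ioc hsm hmt,
    lintegral_union measurableSet_Ioc (Set.Ioc_disjoint_Ioc_of_le le_rfl)]
  have h1 : ∫⁻ u in Set.Ioc s m, ENNReal.ofReal ((warpSeq h j u)⁻¹)
      ≤ ENNReal.ofReal (h₀⁻¹ * (m - s)) :=
    lint_le _ (inv_nonneg.mpr hh₀.1.le) hsm
      (fun u hu => warp_inv_le hh₀ hmono hval hrange hj (lt_of_le_of_lt hs hu.1))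
  have h2 : ∫⁻ u in Set.Ioc m t, ENNReal.ofReal ((warpSeq h j u)⁻¹)
      ≤ ENNReal.ofReal (1 * (t - m)) := by
    refine lint_le _ zero_le_one hmt (fun u hu => ?_)
    have : 1 / (j:ℝ) < u := by
      rcases le_or_gt (1/(j:ℝ)) t with hc | hc
      · calc 1/(j:ℝ) = min (1/(j:ℝ)) t := (min_eq_left hc).symm
          _ ≤ m := le_max_right _ _
          _ < u := hu.1
      · exfalso
        have : m = t := by
          rw [hm, min_eq_right hc.le, max_eq_right hst]
        rw [this] at hu
        exact absurd (hu.1.trans_le hu.2) (lt_irrefl _)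
    rw [warp_inv_top this]
  calc _ ≤ ENNReal.ofReal (h₀⁻¹ * (m - s)) + ENNReal.ofReal (1 * (t - m)) :=
        add_le_add h1 h2
    _ = ENNReal.ofReal (h₀⁻¹ * (m - s) + (t - m)) := by
        rw [← ENNReal.ofReal_add (mul_nonneg (inv_nonneg.mpr hh₀.1.le) (by linarith)) (by linarith)]
        norm_num

end integrals


section segs
variable {X : Type*} [MetricSpace X] {h₀ : ℝ} {h : ℝ → ℝ} {j : ℕ}

lemma segKey (hh₀ : 0 < h₀ ∧ h₀ < 1)
    (hmono : MonotoneOn h (Set.Icc 0 1))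
    (hval : ∀ t ∈ Set.Icc (0 : ℝ) (1 / 2), h t = h₀)
    (hrange : ∀ t ∈ Set.Icc (0 : ℝ) 1, 0 < h t ∧ h t ≤ 1)
    (hj : 1 ≤ j) {P Q : ℝ × X}
    (hc : WPCausal (warpSeq h j) P Q) (hP : 0 ≤ P.1) :
    h₀ * dist P.2 Q.2 + (1 - h₀) * (max Q.1 (1/(j:ℝ)) - max P.1 (1/(j:ℝ))) ≤ Q.1 - P.1 := by
  obtain ⟨hst, hint⟩ := hc
  set a := 1/(j:ℝ) with ha
  set m := max P.1 (min a Q.1) with hm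
  have hsm : P.1 ≤ m := le_max_left _ _
  have hmt : m ≤ Q.1 := max_le hst (min_le_right _ _)
  have hub := hint.trans (lint_warp_le hh₀ hmono hval hrange hj hP hst)
  have hrhs : 0 ≤ h₀⁻¹ * (m - P.1) + (Q.1 - m) :=
    add_nonneg (mul_nonneg (inv_nonneg.mpr hh₀.1.le) (by linarith)) (by linarith)
  have hd : dist P.2 Q.2 ≤ h₀⁻¹ * (m - P.1) + (Q.1 - m) :=
    (ENNReal.ofReal_le_ofReal_iff hrhs).mp hub
  have hident : Q.1 - m = max Q.1 a - max P.1 a := by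
    rcases le_total Q.1 a with hta | hat
    · have h1 : min a Q.1 = Q.1 := min_eq_right hta
      have h2 : max P.1 a = a := max_eq_right (hst.trans hta)
      have h3 : max Q.1 a = a := max_eq_right hta
      rw [hm, h1, max_eq_right hst, h2, h3]; ring
    · have h1 : min a Q.1 = a := min_eq_left hat
      rw [hm, h1, max_eq_left hat]
  have hmul : h₀ * dist P.2 Q.2 ≤ (m - P.1) + h₀ * (Q.1 - m) := by
    have h2 := mul_le_mul_of_nonneg_left hd hh₀.1.le
    have h3 : h₀ * (h₀⁻¹ * (m - P.1)) = m - P.1 := by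
      rw [← mul_assoc, mul_inv_cancel₀ hh₀.1.ne', one_mul]
    rw [mul_add, h3] at h2
    linarith
  rw [← hident]
  linarith

lemma chain_lower (hX : ∀ x y : X, ∀ ε : ℝ, 0 < ε →
      ∃ z : X, max (dist x z) (dist z y) ≤ dist x y / 2 + ε)
    (hh₀ : 0 < h₀ ∧ h₀ < 1)
    (hmono : MonotoneOn h (Set.Icc 0 1))
    (hval : ∀ t ∈ Set.Icc (0 : ℝ) (1 / 2), h t = h₀)
    (hrange : ∀ t ∈ Set.Icc (0 : ℝ) 1, 0 < h t ∧ h t ≤ 1)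
    (hj : 1 ≤ j)
    {p q : ℝ × X} (hp : p.1 ∈ Set.Icc (0:ℝ) 2) (hq : q.1 ∈ Set.Icc (0:ℝ) 2)
    {n : ℕ} {σ : ℕ → ℝ × X} (hch : WPChain (Set.Icc 0 2) (warpSeq h j) p q n σ) :
    limDist h₀ p q - 2/(j:ℝ) ≤ ∑ i ∈ Finset.range (n+1), |(σ (i+1)).1 - (σ i).1| := by
  obtain ⟨hσ0, hσN, hmem, hseg⟩ := hch
  set a := 1/(j:ℝ) with ha
  have hjpos : (0:ℝ) < j := by exact_mod_cast hj
  have hapos : 0 < a := by positivity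
  set L := ∑ i ∈ Finset.range (n+1), |(σ (i+1)).1 - (σ i).1| with hL
  set g : ℕ → ℝ := fun i => max (σ i).1 a with hg
  set dfun : ℕ → ℝ := fun i => dist (σ i).2 (σ (i+1)).2 with hdfun
  have habs : |p.1 - q.1| ≤ L := by
    have h1 := dist_le_range_sum_dist (fun i => (σ i).1) (n+1)
    simp only [Real.dist_eq] at h1
    calc |p.1 - q.1| = |(σ 0).1 - (σ (n+1)).1| := by rw [hσ0, hσN]
      _ ≤ ∑ i ∈ Finset.range (n+1), |(σ i).1 - (σ (i+1)).1| := h1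
      _ = L := Finset.sum_congr rfl fun i _ => abs_sub_comm _ _
  have hDsum : dist p.2 q.2 ≤ ∑ i ∈ Finset.range (n+1), dfun i := by
    have h1 := dist_le_range_sum_dist (fun i => (σ i).2) (n+1)
    calc dist p.2 q.2 = dist ((σ 0).2) ((σ (n+1)).2) := by rw [hσ0, hσN]
      _ ≤ _ := h1
  have hperseg : ∀ i ≤ n, h₀ * dfun i + (1-h₀) * |g (i+1) - g i|
      ≤ |(σ (i+1)).1 - (σ i).1| := by
    intro i hi
    have h0i : 0 ≤ (σ i).1 := (hmem i (by omega)).1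
    have h0i1 : 0 ≤ (σ (i+1)).1 := (hmem (i+1) (by omega)).1
    rcases hseg i hi with hc | hc
    · have key := segKey hh₀ hmono hval hrange hj hc h0i
      have hst := hc.1
      have hgm : g i ≤ g (i+1) := max_le_max hst le_rfl
      rw [abs_of_nonneg (by linarith : (0:ℝ) ≤ g (i+1) - g i),
        abs_of_nonneg (by linarith : (0:ℝ) ≤ (σ (i+1)).1 - (σ i).1)]
      exact key
    · have key := segKey hh₀ hmono hval hrange hj hc h0i1
      have hst := hc.1
      have hgm : g (i+1) ≤ g i := max_le_max hst le_rfl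
      rw [abs_of_nonpos (by linarith : g (i+1) - g i ≤ 0),
        abs_of_nonpos (by linarith : (σ (i+1)).1 - (σ i).1 ≤ 0)]
      have hdc : dfun i = dist (σ (i+1)).2 (σ i).2 := dist_comm _ _
      rw [hdc]
      have : -(g (i+1) - g i) = g i - g (i+1) := by ring
      rw [this]
      have : -((σ (i+1)).1 - (σ i).1) = (σ i).1 - (σ (i+1)).1 := by ring
      rw [this]
      exact key
  have hsum : h₀ * (∑ i ∈ Finset.range (n+1), dfun i)
      + (1-h₀) * (∑ i ∈ Finset.range (n+1), |g (i+1) - g i|) ≤ L := by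
    rw [Finset.mul_sum, Finset.mul_sum, ← Finset.sum_add_distrib]
    exact Finset.sum_le_sum fun i hi =>
      hperseg i (Nat.lt_succ_iff.mp (Finset.mem_range.mp hi))
  by_cases hAcase : ∀ i, i ≤ n+1 → a ≤ (σ i).1
  · have hd_le : ∀ i ∈ Finset.range (n+1), dfun i ≤ |(σ (i+1)).1 - (σ i).1| := by
      intro i hi
      have hi' : i ≤ n := Nat.lt_succ_iff.mp (Finset.mem_range.mp hi)
      have hkey := hperseg i hi'
      have hgi : g i = (σ i).1 := max_eq_left (hAcase i (by omega))
      have hgi1 : g (i+1) = (σ (i+1)).1 := max_eq_left (hAcase (i+1) (by omega))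
      rw [hgi, hgi1] at hkey
      have h2 : h₀ * dfun i ≤ h₀ * |(σ (i+1)).1 - (σ i).1| := by linarith
      exact le_of_mul_le_mul_left h2 hh₀.1
    have hD : dist p.2 q.2 ≤ L := hDsum.trans (Finset.sum_le_sum hd_le)
    have h1 : limDist h₀ p q ≤ max |p.1 - q.1| (dist p.2 q.2) := min_le_left _ _
    have h2 : max |p.1-q.1| (dist p.2 q.2) ≤ L := max_le habs hD
    have h3 : (0:ℝ) ≤ 2/(j:ℝ) := by positivity
    rw [ha] at *
    linarith
  · push_neg at hAcase
    obtain ⟨k, hkle, hka⟩ := hAcase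
    have hgk : g k = a := max_eq_right hka.le
    have habsg : ∀ i, |g (i+1) - g i| = dist (g i) (g (i+1)) := by
      intro i
      rw [Real.dist_eq, abs_sub_comm]
    have hSg : (max p.1 a - a) + (max q.1 a - a)
        ≤ ∑ i ∈ Finset.range (n+1), |g (i+1) - g i| := by
      have hsplit : ∑ i ∈ Finset.range (n+1), dist (g i) (g (i+1))
          = ∑ i ∈ Finset.range k, dist (g i) (g (i+1))
            + ∑ i ∈ Finset.range (n+1-k), dist (g (k+i)) (g (k+i+1)) := by
        have h0 := Finset.sum_range_add (fun i => dist (g i) (g (i+1))) k (n+1-k)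
        rw [show k + (n+1-k) = n+1 by omega] at h0
        exact h0
      have h1 : dist (g 0) (g k) ≤ ∑ i ∈ Finset.range k, dist (g i) (g (i+1)) :=
        dist_le_range_sum_dist g k
      have h2 : dist (g k) (g (n+1))
          ≤ ∑ i ∈ Finset.range (n+1-k), dist (g (k+i)) (g (k+i+1)) := by
        have h3 := dist_le_range_sum_dist (fun i => g (k+i)) (n+1-k)
        simp only [show ∀ i, k + i + 1 = k + (i+1) from fun i => by ring] at h3 ⊢
        rw [show k + (n+1-k) = n+1 by omega] at h3
        simpa using h3
      have e1 : max p.1 a - a ≤ dist (g 0) (g k) := by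
        have : g 0 = max p.1 a := by rw [hg]; simp [hσ0]
        rw [Real.dist_eq, this, hgk]
        exact le_abs_self _
      have e2 : max q.1 a - a ≤ dist (g k) (g (n+1)) := by
        have : g (n+1) = max q.1 a := by rw [hg]; simp [hσN]
        rw [Real.dist_eq, this, hgk, abs_sub_comm]
        exact le_abs_self _
      calc (max p.1 a - a) + (max q.1 a - a)
          ≤ dist (g 0) (g k) + dist (g k) (g (n+1)) := by linarith
        _ ≤ ∑ i ∈ Finset.range (n+1), dist (g i) (g (i+1)) := by
            rw [hsplit]; exact add_le_add h1 h2
        _ = ∑ i ∈ Finset.range (n+1), |g (i+1) - g i| :=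
            Finset.sum_congr rfl fun i _ => (habsg i).symm
    have hkey2 : h₀ * dist p.2 q.2
        + (1-h₀) * ((max p.1 a - a) + (max q.1 a - a)) ≤ L := by
      have t1 := mul_le_mul_of_nonneg_left hDsum hh₀.1.le
      have t2 := mul_le_mul_of_nonneg_left hSg (by linarith : (0:ℝ) ≤ 1 - h₀)
      linarith
    have hmp : p.1 ≤ max p.1 a := le_max_left _ _
    have hmq : q.1 ≤ max q.1 a := le_max_left _ _
    have hbound : h₀ * dist p.2 q.2 + (1-h₀) * (p.1 + q.1) - 2*a ≤ L := by
      nlinarith [hh₀.1, hh₀.2]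
    rcases le_total (p.1 + q.1) (dist p.2 q.2) with hTD | hDT
    · have hinf := bottomInf_eq hX p q hp.1 hq.1
      have hlim : limDist h₀ p q ≤ p.1 + q.1 + h₀ * (dist p.2 q.2 - p.1 - q.1) := by
        calc limDist h₀ p q ≤ p.1 + q.1 + h₀ * sInf { r : ℝ | ∃ x' y' : X,
              dist p.2 x' ≤ p.1 ∧ dist q.2 y' ≤ q.1 ∧ r = dist x' y' } := min_le_right _ _
          _ = p.1 + q.1 + h₀ * (dist p.2 q.2 - p.1 - q.1) := by
              rw [hinf, max_eq_left (by linarith)]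
      have expand : p.1 + q.1 + h₀ * (dist p.2 q.2 - p.1 - q.1)
          = h₀ * dist p.2 q.2 + (1-h₀) * (p.1 + q.1) := by ring
      rw [expand] at hlim
      rw [ha, show (2:ℝ)/(j:ℝ) = 2*(1/(j:ℝ)) from by ring] at *
      linarith
    · have hlim : limDist h₀ p q ≤ max |p.1 - q.1| (dist p.2 q.2) := min_le_left _ _
      have hDL : dist p.2 q.2 - 2*a ≤ L := by nlinarith [hh₀.1, hh₀.2]
      have hmaxL : max |p.1 - q.1| (dist p.2 q.2) ≤ L + 2*a := by
        refine max_le ?_ ?_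
        · linarith
        · linarith
      rw [ha, show (2:ℝ)/(j:ℝ) = 2*(1/(j:ℝ)) from by ring] at *
      linarith

end segs

section claim1

variable {X : Type*} [MetricSpace X] {h₀ : ℝ} {h : ℝ → ℝ} {j : ℕ}

lemma claim1 (hX : ∀ x y : X, ∀ ε : ℝ, 0 < ε →
      ∃ z : X, max (dist x z) (dist z y) ≤ dist x y / 2 + ε)
    (hrange : ∀ t ∈ Set.Icc (0 : ℝ) 1, 0 < h t ∧ h t ≤ 1)
    (hj : 1 ≤ j) {p q : ℝ × X} (hp : p.1 ∈ Set.Icc (0:ℝ) 2) (hq : q.1 ∈ Set.Icc (0:ℝ) 2)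
    {ε : ℝ} (hε : 0 < ε) :
    ∃ n σ, WPChain (Set.Icc 0 2) (warpSeq h j) p q n σ ∧
      ∑ i ∈ Finset.range (n+1), |(σ (i+1)).1 - (σ i).1|
        ≤ max |p.1 - q.1| (dist p.2 q.2) + ε := by
  obtain ⟨hp0, hp2⟩ := hp
  obtain ⟨hq0, hq2⟩ := hq
  by_cases hcase : dist p.2 q.2 ≤ |p.1 - q.1|
  · refine ⟨0, fun i => if i = 0 then p else q, ⟨rfl, rfl, ?_, ?_⟩, ?_⟩
    · intro i hi
      interval_cases i
      · exact ⟨hp0, hp2⟩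
      · exact ⟨hq0, hq2⟩
    · intro i hi
      interval_cases i
      norm_num
      rcases le_total p.1 q.1 with hle | hle
      · left
        refine ⟨hle, ?_⟩
        refine le_trans (ENNReal.ofReal_le_ofReal ?_) (lint_warp_ge hrange hj hp0 hle)
        have habs : |p.1 - q.1| = q.1 - p.1 := by
          rw [abs_sub_comm, abs_of_nonneg (by linarith)]
        linarith
      · right
        refine ⟨hle, ?_⟩
        refine le_trans (ENNReal.ofReal_le_ofReal ?_) (lint_warp_ge hrange hj hq0 hle)
        have habs : |p.1 - q.1| = p.1 - q.1 := abs_of_nonneg (by linarith)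
        rw [dist_comm]
        linarith
    · rw [Finset.sum_range_one]
      norm_num
      rw [abs_sub_comm]
      linarith [le_max_left |p.1 - q.1| (dist p.2 q.2)]
  · push_neg at hcase
    set δ := min 1 (ε/4) with hδdef
    have hδpos : 0 < δ := lt_min one_pos (by linarith)
    have hδ1 : δ ≤ 1 := min_le_left _ _
    have hδε : δ ≤ ε/4 := min_le_right _ _
    obtain ⟨N, z, hz0, hzN, hdz, hsz⟩ :=
      subdiv hX hδpos (show (0:ℝ) < ε/4 by linarith) p.2 q.2
    set dd : ℕ → ℝ := fun i => if i < N then dist (z i) (z (i+1)) else 0 with hdddef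
    have hdd0 : ∀ i, 0 ≤ dd i := by
      intro i
      simp only [hdddef]
      split_ifs
      · exact dist_nonneg
      · exact le_refl 0
    have hddle : ∀ i, dd i ≤ δ := by
      intro i
      simp only [hdddef]
      split_ifs with hi
      · exact hdz i hi
      · exact hδpos.le
    set H : ℕ → ℝ := fun n => Nat.rec p.1 (fun i Hi =>
      if 0 < q.1 - Hi then (if Hi + dd i ≤ 2 then Hi + dd i else Hi - dd i)
      else (if 0 ≤ Hi - dd i then Hi - dd i else Hi + dd i)) n with hHdef
    have Hstep : ∀ i, H (i+1) = if 0 < q.1 - H i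
        then (if H i + dd i ≤ 2 then H i + dd i else H i - dd i)
        else (if 0 ≤ H i - dd i then H i - dd i else H i + dd i) := fun i => rfl
    have hH0 : H 0 = p.1 := rfl
    set S : ℕ → ℝ := fun i => ∑ k ∈ Finset.range i, dd k with hSdef
    have hS0 : S 0 = 0 := by simp [hSdef]
    have hSstep : ∀ i, S (i+1) = S i + dd i := fun i => Finset.sum_range_succ dd i
    have Hinv : ∀ i, 0 ≤ H i ∧ H i ≤ 2 ∧ q.1 - H i ≤ max (q.1 - p.1 - S i) (2*δ)
        ∧ min (q.1 - p.1 + S i) (-(2*δ)) ≤ q.1 - H i := by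
      intro i
      induction i with
      | zero =>
        rw [hH0, hS0]
        exact ⟨hp0, hp2, le_max_of_le_left (by linarith),
          min_le_of_left_le (by linarith)⟩
      | succ i ih =>
        obtain ⟨ih0, ih2, ihu, ihl⟩ := ih
        have hsi := hSstep i
        have hd0 := hdd0 i
        have hdδ := hddle i
        rw [Hstep i, hsi]
        split_ifs with h1 h2 h3
        · refine ⟨by linarith, h2, ?_, min_le_of_right_le (by linarith)⟩
          rcases max_cases (q.1 - p.1 - S i) (2*δ) with ⟨he, _⟩ | ⟨he, _⟩
          · rw [he] at ihu; exact le_max_of_le_left (by linarith)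
          · rw [he] at ihu; exact le_max_of_le_right (by linarith)
        · push_neg at h2
          refine ⟨by linarith, by linarith, le_max_of_le_right (by linarith),
            min_le_of_right_le (by linarith)⟩
        · push_neg at h1
          refine ⟨h3, by linarith, le_max_of_le_right (by linarith), ?_⟩
          rcases min_cases (q.1 - p.1 + S i) (-(2*δ)) with ⟨he, _⟩ | ⟨he, _⟩
          · rw [he] at ihl; exact min_le_of_left_le (by linarith)
          · rw [he] at ihl; exact min_le_of_right_le (by linarith)
        · push_neg at h1 h3
          refine ⟨by linarith, by linarith, le_max_of_le_right (by linarith),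
            min_le_of_right_le (by linarith)⟩
    have Hdiff : ∀ i, |H (i+1) - H i| = dd i := by
      intro i
      have h0 := hdd0 i
      rw [Hstep i]
      split_ifs
      · rw [show (H i + dd i) - H i = dd i from by ring]; exact abs_of_nonneg h0
      · rw [show (H i - dd i) - H i = -(dd i) from by ring, abs_neg]; exact abs_of_nonneg h0
      · rw [show (H i - dd i) - H i = -(dd i) from by ring, abs_neg]; exact abs_of_nonneg h0
      · rw [show (H i + dd i) - H i = dd i from by ring]; exact abs_of_nonneg h0
    have hSN_eq : S N = ∑ k ∈ Finset.range N, dist (z k) (z (k+1)) := by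
      refine Finset.sum_congr rfl fun k hk => ?_
      simp [hdddef, Finset.mem_range.mp hk]
    have hDsum : dist p.2 q.2 ≤ S N := by
      rw [hSN_eq]
      have h1 := dist_le_range_sum_dist z N
      rw [hz0, hzN] at h1
      exact h1
    have hSN_ge : |q.1 - p.1| ≤ S N := by
      calc |q.1 - p.1| = |p.1 - q.1| := abs_sub_comm _ _
        _ ≤ dist p.2 q.2 := hcase.le
        _ ≤ S N := hDsum
    have hSN_le : S N ≤ dist p.2 q.2 + ε/4 := by rw [hSN_eq]; exact hsz
    have hE := abs_le.mp hSN_ge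
    have hRend : |q.1 - H N| ≤ 2*δ := by
      obtain ⟨_, _, hu, hl⟩ := Hinv N
      rw [max_eq_right (by linarith : q.1 - p.1 - S N ≤ 2*δ)] at hu
      rw [min_eq_right (by linarith : -(2*δ) ≤ q.1 - p.1 + S N)] at hl
      rw [abs_le]
      exact ⟨by linarith, hu⟩
    refine ⟨N, fun i => if i ≤ N then (H i, z i) else q, ⟨?_, ?_, ?_, ?_⟩, ?_⟩
    · simp only [if_pos (Nat.zero_le N)]
      rw [hz0, hH0]
    · simp only [if_neg (by omega : ¬ N+1 ≤ N)]
    · intro i hi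
      by_cases hiN : i ≤ N
      · simp only [if_pos hiN]
        exact ⟨(Hinv i).1, (Hinv i).2.1⟩
      · simp only [if_neg hiN]
        exact ⟨hq0, hq2⟩
    · intro i hi
      by_cases hiN : i < N
      · have hi1 : i + 1 ≤ N := hiN
        simp only [if_pos (le_of_lt hiN), if_pos hi1]
        have hdis : dist (z i) (z (i+1)) = dd i := by simp [hdddef, hiN]
        have hdi := Hdiff i
        rcases le_total (H i) (H (i+1)) with hle | hle
        · left
          refine ⟨hle, ?_⟩
          have hle2 : dist (z i) (z (i+1)) ≤ H (i+1) - H i := by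
            rw [hdis, ← hdi, abs_of_nonneg (by linarith : (0:ℝ) ≤ H (i+1) - H i)]
          exact le_trans (ENNReal.ofReal_le_ofReal hle2)
            (lint_warp_ge hrange hj (Hinv i).1 hle)
        · right
          refine ⟨hle, ?_⟩
          have hle2 : dist (z (i+1)) (z i) ≤ H i - H (i+1) := by
            rw [dist_comm, hdis, ← hdi,
              abs_of_nonpos (by linarith : H (i+1) - H i ≤ 0)]
            ring_nf
            exact le_refl _
          exact le_trans (ENNReal.ofReal_le_ofReal hle2)
            (lint_warp_ge hrange hj (Hinv (i+1)).1 hle)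
      · have hiN' : i = N := by omega
        rw [hiN']
        simp only [if_pos (le_refl N), if_neg (by omega : ¬ N+1 ≤ N)]
        rcases le_total (H N) q.1 with hle | hle
        · left
          refine ⟨hle, ?_⟩
          show ENNReal.ofReal (dist (z N) q.2) ≤ _
          rw [hzN, dist_self]
          simp
        · right
          refine ⟨hle, ?_⟩
          show ENNReal.ofReal (dist q.2 (z N)) ≤ _
          rw [hzN, dist_self]
          simp
    · rw [Finset.sum_range_succ]
      have hmain : ∑ i ∈ Finset.range N,
          |((fun i => if i ≤ N then (H i, z i) else q) (i+1)).1
            - ((fun i => if i ≤ N then (H i, z i) else q) i).1| = S N := by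
        refine Finset.sum_congr rfl fun i hi => ?_
        have hiN := Finset.mem_range.mp hi
        simp only [if_pos (le_of_lt hiN), if_pos (show i+1 ≤ N from hiN)]
        exact Hdiff i
      rw [hmain]
      simp only [if_pos (le_refl N), if_neg (by omega : ¬ N+1 ≤ N)]
      have hfin : S N + |q.1 - H N| ≤ dist p.2 q.2 + ε/4 + 2*δ := by linarith
      have hmax := le_max_right |p.1 - q.1| (dist p.2 q.2)
      linarith

end claim1

section claim2

variable {X : Type*} [MetricSpace X] {h₀ : ℝ} {h : ℝ → ℝ} {j : ℕ}

lemma claim2 (hX : ∀ x y : X, ∀ ε : ℝ, 0 < ε →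
      ∃ z : X, max (dist x z) (dist z y) ≤ dist x y / 2 + ε)
    (hh₀ : 0 < h₀ ∧ h₀ < 1)
    (hval : ∀ t ∈ Set.Icc (0 : ℝ) (1 / 2), h t = h₀)
    (hrange : ∀ t ∈ Set.Icc (0 : ℝ) 1, 0 < h t ∧ h t ≤ 1)
    (hj : 1 ≤ j) {p q : ℝ × X} (hp : p.1 ∈ Set.Icc (0:ℝ) 2) (hq : q.1 ∈ Set.Icc (0:ℝ) 2)
    {ε : ℝ} (hε : 0 < ε) (hjε : 1 / (2*(j:ℝ)) ≤ ε/4) :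
    ∃ n σ, WPChain (Set.Icc 0 2) (warpSeq h j) p q n σ ∧
      ∑ i ∈ Finset.range (n+1), |(σ (i+1)).1 - (σ i).1|
        ≤ p.1 + q.1 + h₀ * max (dist p.2 q.2 - p.1 - q.1) 0 + ε := by
  obtain ⟨hp0, hp2⟩ := hp
  obtain ⟨hq0, hq2⟩ := hq
  have hjpos : (0:ℝ) < j := by exact_mod_cast hj
  set b := 1 / (2*(j:ℝ)) with hbdef
  have hbpos : 0 < b := by positivity
  have hb2 : b ≤ 2 := by
    have hj1 : (1:ℝ) ≤ j := by exact_mod_cast hj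
    rw [hbdef, div_le_iff₀ (by positivity)]
    nlinarith
  obtain ⟨x', y', hx', hy', hxy'⟩ :=
    exists_near hX (x := p.2) (y := q.2) hp0 hq0 (show (0:ℝ) < ε/16 by linarith)
  obtain ⟨N, z, hz0, hzN, hdz, hsz⟩ :=
    subdiv hX (show (0:ℝ) < b/2 by linarith) (show (0:ℝ) < ε/4 by linarith) x' y'
  set dd : ℕ → ℝ := fun i => if i < N then dist (z i) (z (i+1)) else 0 with hdddef
  have hdd0 : ∀ i, 0 ≤ dd i := by
    intro i
    simp only [hdddef]
    split_ifs
    · exact dist_nonneg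
    · exact le_refl 0
  have hddle : ∀ i, dd i ≤ b/2 := by
    intro i
    simp only [hdddef]
    split_ifs with hi
    · exact hdz i hi
    · linarith
  set H : ℕ → ℝ := fun n => Nat.rec 0 (fun i Hi =>
    if Hi + h₀ * dd i ≤ b then Hi + h₀ * dd i else Hi - h₀ * dd i) n with hHdef
  have Hstep : ∀ i, H (i+1) = if H i + h₀ * dd i ≤ b then H i + h₀ * dd i
      else H i - h₀ * dd i := fun i => rfl
  have hH0 : H 0 = 0 := rfl
  have Hinv : ∀ i, 0 ≤ H i ∧ H i ≤ b := by
    intro i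
    induction i with
    | zero => rw [hH0]; exact ⟨le_refl 0, hbpos.le⟩
    | succ i ih =>
      obtain ⟨ih0, ihb⟩ := ih
      have h1 := hdd0 i
      have h2 := hddle i
      have h3 : h₀ * dd i ≤ b/2 := by nlinarith [hh₀.1, hh₀.2]
      have h4 : 0 ≤ h₀ * dd i := mul_nonneg hh₀.1.le h1
      rw [Hstep i]
      split_ifs with hc
      · exact ⟨by linarith, hc⟩
      · push_neg at hc
        exact ⟨by linarith, by linarith⟩
  have Hdiff : ∀ i, |H (i+1) - H i| = h₀ * dd i := by
    intro i
    have h4 : 0 ≤ h₀ * dd i := mul_nonneg hh₀.1.le (hdd0 i)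
    rw [Hstep i]
    split_ifs
    · rw [show (H i + h₀ * dd i) - H i = h₀ * dd i from by ring]
      exact abs_of_nonneg h4
    · rw [show (H i - h₀ * dd i) - H i = -(h₀ * dd i) from by ring, abs_neg]
      exact abs_of_nonneg h4
  have hSN_eq : ∑ k ∈ Finset.range N, dd k = ∑ k ∈ Finset.range N, dist (z k) (z (k+1)) := by
    refine Finset.sum_congr rfl fun k hk => ?_
    simp [hdddef, Finset.mem_range.mp hk]
  have hSN_le : ∑ k ∈ Finset.range N, dd k ≤ dist x' y' + ε/4 := by
    rw [hSN_eq]; exact hsz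
  -- the chain
  set σ : ℕ → ℝ × X := fun i => if i = 0 then p else if i ≤ N+1 then (H (i-1), z (i-1))
    else if i = N+2 then ((0:ℝ), z N) else q with hσdef
  have hσ0 : σ 0 = p := rfl
  have hσlast : σ (N+2+1) = q := by
    simp only [hσdef]
    rw [if_neg (by omega), if_neg (by omega), if_neg (by omega)]
  have hσmid : ∀ i, 1 ≤ i → i ≤ N+1 → σ i = (H (i-1), z (i-1)) := by
    intro i h1 h2
    simp only [hσdef]
    rw [if_neg (by omega), if_pos h2]
  have hσN2 : σ (N+2) = ((0:ℝ), z N) := by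
    simp only [hσdef]
    rw [if_neg (by omega : ¬ N+2 = 0), if_neg (by omega : ¬ N+2 ≤ N+1)]
    simp
  have hbot : ∀ (s t : ℝ) (k : ℕ), 0 ≤ s → s ≤ t → t ≤ b → t - s = h₀ * dd k →
      ENNReal.ofReal (dd k) ≤ ∫⁻ u in Set.Ioc s t, ENNReal.ofReal ((warpSeq h j u)⁻¹) := by
    intro s t k hs hst htb hdiff
    have hlint := lint_warp_bottom hval hh₀ hj hs hst (htb.trans_eq hbdef)
    refine le_trans (ENNReal.ofReal_le_ofReal ?_) hlint
    have heq : h₀⁻¹ * (t - s) = dd k := by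
      rw [hdiff, ← mul_assoc, inv_mul_cancel₀ hh₀.1.ne', one_mul]
    exact heq.ge
  refine ⟨N+2, σ, ⟨hσ0, hσlast, ?_, ?_⟩, ?_⟩
  · intro i hi
    rcases Nat.eq_zero_or_pos i with h0 | h0
    · rw [h0, hσ0]; exact ⟨hp0, hp2⟩
    rcases le_or_gt i (N+1) with hle | hlt
    · rw [hσmid i h0 hle]
      exact ⟨(Hinv (i-1)).1, (Hinv (i-1)).2.trans hb2⟩
    rcases Nat.lt_or_ge i (N+3) with h2 | h2
    · have hi2 : i = N+2 := by omega
      rw [hi2, hσN2]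
      exact ⟨le_refl 0, by norm_num⟩
    · have hi3 : i = N+2+1 := by omega
      rw [hi3, hσlast]
      exact ⟨hq0, hq2⟩
  · intro i hi
    rcases Nat.eq_zero_or_pos i with h0 | h0
    · -- segment p to (0, x')
      subst h0
      right
      have e01 : σ (0+1) = ((0:ℝ), x') := by
        rw [hσmid (0+1) le_rfl (by omega)]
        norm_num [hH0, hz0]
      rw [hσ0, e01]
      refine ⟨hp0, ?_⟩
      show ENNReal.ofReal (dist x' p.2) ≤ _
      rw [dist_comm]
      exact le_trans (ENNReal.ofReal_le_ofReal (by simpa using hx'))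
        (lint_warp_ge hrange hj le_rfl hp0)
    rcases lt_or_ge i (N+1) with hmidseg | h2
    · -- zigzag segments
      have e1 := hσmid i h0 (by omega)
      have e2 := hσmid (i+1) (by omega) (by omega)
      rw [e1, e2]
      set k := i - 1 with hkdef
      have hkN : k < N := by omega
      rw [show i + 1 - 1 = k + 1 from by omega]
      have hdis : dist (z k) (z (k+1)) = dd k := by simp [hdddef, hkN]
      have hdi := Hdiff k
      rcases le_total (H k) (H (k+1)) with hle | hle
      · left
        refine ⟨hle, ?_⟩
        show ENNReal.ofReal (dist (z k) (z (k+1))) ≤ _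
        rw [hdis]
        refine hbot (H k) (H (k+1)) k (Hinv k).1 hle (Hinv (k+1)).2 ?_
        rw [← hdi]
        exact (abs_of_nonneg (by linarith)).symm
      · right
        refine ⟨hle, ?_⟩
        show ENNReal.ofReal (dist (z (k+1)) (z k)) ≤ _
        rw [dist_comm, hdis]
        refine hbot (H (k+1)) (H k) k (Hinv (k+1)).1 hle (Hinv k).2 ?_
        rw [← hdi, abs_of_nonpos (by linarith)]
        ring
    · rcases eq_or_lt_of_le h2 with h21 | h22
      · -- i = N+1 : segment (H N, z N) to (0, z N)
        rw [← h21]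
        right
        rw [hσmid (N+1) (by omega) le_rfl, show N+1+1 = N+2 from rfl, hσN2]
        simp only [Nat.add_sub_cancel]
        refine ⟨(Hinv N).1, ?_⟩
        show ENNReal.ofReal (dist (z N) (z N)) ≤ _
        rw [dist_self]
        simp
      · -- i = N+2
        have hi2 : i = N+2 := by omega
        rw [hi2]
        left
        rw [hσN2, show N+2+1 = N+2+1 from rfl, hσlast]
        refine ⟨hq0, ?_⟩
        show ENNReal.ofReal (dist (z N) q.2) ≤ _
        rw [hzN, dist_comm]
        exact le_trans (ENNReal.ofReal_le_ofReal (by simpa using hy'))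
          (lint_warp_ge hrange hj le_rfl hq0)
  · -- cost
    rw [Finset.sum_range_succ, Finset.sum_range_succ, Finset.sum_range_succ']
    have hterm0 : |(σ (0+1)).1 - (σ 0).1| = p.1 := by
      rw [hσ0, hσmid (0+1) le_rfl (by omega)]
      norm_num [hH0, abs_of_nonneg hp0]
    have htermN1 : |(σ (N+1+1)).1 - (σ (N+1)).1| = H N := by
      rw [show N+1+1 = N+2 from rfl, hσN2, hσmid (N+1) (by omega) le_rfl]
      simp only [Nat.add_sub_cancel]
      show |(0:ℝ) - H N| = H N
      rw [zero_sub, abs_neg, abs_of_nonneg (Hinv N).1]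
    have htermN2 : |(σ (N+2+1)).1 - (σ (N+2)).1| = q.1 := by
      rw [hσlast, hσN2]
      show |q.1 - (0:ℝ)| = q.1
      rw [sub_zero, abs_of_nonneg hq0]
    have htermmid : ∀ i ∈ Finset.range N, |(σ (i+1+1)).1 - (σ (i+1)).1| = h₀ * dd i := by
      intro i hi
      have hiN := Finset.mem_range.mp hi
      rw [hσmid (i+1) (by omega) (by omega), hσmid (i+1+1) (by omega) (by omega)]
      simp only [Nat.add_sub_cancel]
      exact Hdiff i
    rw [hterm0, htermN1, htermN2, Finset.sum_congr rfl htermmid, ← Finset.mul_sum]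
    have hHNb : H N ≤ b := (Hinv N).2
    have hx2 : h₀ * (∑ k ∈ Finset.range N, dd k)
        ≤ h₀ * (dist x' y' + ε/4) := mul_le_mul_of_nonneg_left hSN_le hh₀.1.le
    have hx3 : h₀ * (dist x' y' + ε/4)
        ≤ h₀ * max (dist p.2 q.2 - p.1 - q.1) 0 + 3*(ε/16) + ε/4 := by
      have hmul := mul_le_mul_of_nonneg_left hxy' hh₀.1.le
      nlinarith [hh₀.1, hh₀.2, hε]
    linarith

end claim2


/-- pointwise convergence of the warping functions is not enough: for the
warping functions `f_j` built from `h` with `h ≡ h₀ ∈ (0,1)` on `[0,1/2]`, `h(1) = 1`, the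
null distances of `[0,2] ×_{f_j} X` converge uniformly to the distance `d₀ ≠ d̂_σ`. -/
theorem stmt16 {X : Type*} [MetricSpace X] [CompactSpace X]
    (hX : ∀ x y : X, ∀ ε : ℝ, 0 < ε →
      ∃ z : X, max (dist x z) (dist z y) ≤ dist x y / 2 + ε)
    (h₀ : ℝ) (hh₀ : 0 < h₀ ∧ h₀ < 1)
    (h : ℝ → ℝ)
    (hcont : ContinuousOn h (Set.Icc 0 1))
    (hmono : MonotoneOn h (Set.Icc 0 1))
    (hval : ∀ t ∈ Set.Icc (0 : ℝ) (1 / 2), h t = h₀)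
    (hone : h 1 = 1)
    (hrange : ∀ t ∈ Set.Icc (0 : ℝ) 1, 0 < h t ∧ h t ≤ 1) :
    ∀ ε : ℝ, 0 < ε → ∃ N : ℕ, ∀ j ≥ N, ∀ p q : ℝ × X,
      p.1 ∈ Set.Icc (0 : ℝ) 2 → q.1 ∈ Set.Icc (0 : ℝ) 2 →
      |nullDist (Set.Icc 0 2) (warpSeq h j) p q - limDist h₀ p q| ≤ ε := by
  intro ε hε
  refine ⟨max 1 ⌈(8:ℝ)/ε⌉₊, fun j hj p q hp hq => ?_⟩
  have hj1 : 1 ≤ j := le_trans (le_max_left _ _) hj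
  have hjpos : (0:ℝ) < j := by exact_mod_cast hj1
  have hjc : (8:ℝ)/ε ≤ j := by
    have h1 : (⌈(8:ℝ)/ε⌉₊ : ℝ) ≤ j := by exact_mod_cast le_trans (le_max_right _ _) hj
    exact (Nat.le_ceil _).trans h1
  have hje : (8:ℝ) ≤ j * ε := by
    have := (div_le_iff₀ hε).mp hjc
    linarith
  have h2j : 2/(j:ℝ) ≤ ε := by
    rw [div_le_iff₀ hjpos]
    nlinarith
  have hjε : 1/(2*(j:ℝ)) ≤ ε/4 := by
    rw [div_le_div_iff₀ (by positivity) (by norm_num)]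
    nlinarith
  obtain ⟨n1, σ1, hch1, hc1⟩ := claim1 hX hrange hj1 hp hq hε
  obtain ⟨n2, σ2, hch2, hc2⟩ := claim2 hX hh₀ hval hrange hj1 hp hq hε hjε
  have hbdd : BddBelow { r | ∃ n σ, WPChain (Set.Icc 0 2) (warpSeq h j) p q n σ ∧
      r = ∑ i ∈ Finset.range (n + 1), |(σ (i + 1)).1 - (σ i).1| } := by
    refine ⟨0, fun r hr => ?_⟩
    obtain ⟨n, σ, _, rfl⟩ := hr
    exact Finset.sum_nonneg fun i _ => abs_nonneg _
  have hne : Set.Nonempty { r | ∃ n σ, WPChain (Set.Icc 0 2) (warpSeq h j) p q n σ ∧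
      r = ∑ i ∈ Finset.range (n + 1), |(σ (i + 1)).1 - (σ i).1| } :=
    ⟨_, n1, σ1, hch1, rfl⟩
  have heq : nullDist (Set.Icc 0 2) (warpSeq h j) p q
      = sInf { r | ∃ n σ, WPChain (Set.Icc 0 2) (warpSeq h j) p q n σ ∧
        r = ∑ i ∈ Finset.range (n + 1), |(σ (i + 1)).1 - (σ i).1| } := rfl
  have hu1 : nullDist (Set.Icc 0 2) (warpSeq h j) p q
      ≤ max |p.1 - q.1| (dist p.2 q.2) + ε := by
    rw [heq]
    exact le_trans (csInf_le hbdd ⟨n1, σ1, hch1, rfl⟩) hc1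
  have hu2 : nullDist (Set.Icc 0 2) (warpSeq h j) p q
      ≤ p.1 + q.1 + h₀ * max (dist p.2 q.2 - p.1 - q.1) 0 + ε := by
    rw [heq]
    exact le_trans (csInf_le hbdd ⟨n2, σ2, hch2, rfl⟩) hc2
  have hupper : nullDist (Set.Icc 0 2) (warpSeq h j) p q ≤ limDist h₀ p q + ε := by
    rw [limDist, bottomInf_eq hX p q hp.1 hq.1]
    rcases min_cases (max |p.1 - q.1| (dist p.2 q.2))
      (p.1 + q.1 + h₀ * max (dist p.2 q.2 - p.1 - q.1) 0) with ⟨he, _⟩ | ⟨he, _⟩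
    · rw [he]; exact hu1
    · rw [he]; exact hu2
  have hlower : limDist h₀ p q - ε ≤ nullDist (Set.Icc 0 2) (warpSeq h j) p q := by
    have hl : limDist h₀ p q - 2/(j:ℝ) ≤ nullDist (Set.Icc 0 2) (warpSeq h j) p q := by
      rw [heq]
      refine le_csInf hne fun r hr => ?_
      obtain ⟨n, σ, hch, rfl⟩ := hr
      exact chain_lower hX hh₀ hmono hval hrange hj1 hp hq hch
    linarith
  rw [abs_le]
  constructor <;> linarith
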